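/- Let k = 𝔽_q, q = p^m, V = k^N, and let φ be the σ-semilinear endomorphism of V with matrix ᵗA in some basis (σ = Frobenius). With V_ss = ⋂_n Im(φ^n) nonzero of dimension s₀ and A_ss the matrix of φ restricted to V_ss in a basis of V_ss, one has det(I − T·A^{σ^{m−1}}⋯A^{σ}·A) = det(I − T·A_ss^{σ^{m−1}}⋯A_ss^{σ}·A_ss) as polynomials in k[T]; this polynomial has degree dim_k V_ss and leading coefficient (up to sign) the norm N_{k/𝔽_p}(det A_ss). -/

import Mathlib

open Polynomial Matrix

section Aux

variable {R : Type*} [CommRing R] {n : Type*} [Fintype n] [DecidableEq n]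

lemma aux_charpoly_transpose (M : Matrix n n R) : M.transpose.charpoly = M.charpoly := by
  rw [Matrix.charpoly, Matrix.charpoly, ← Matrix.det_transpose (Matrix.charmatrix M)]
  congr 1
  ext i j
  by_cases h : i = j <;>
    simp [Matrix.charmatrix_apply, Matrix.transpose_apply, Matrix.diagonal_apply, h, eq_comm]

variable {p : ℕ} [Fact p.Prime] [CharP R p]

lemma aux_pmat_succ (M : Matrix n n R) (j : ℕ) :
    ((List.range (j+1)).map (fun i => M.map (fun x => x ^ p ^ (j - i)))).prod
      = ((((List.range j).map (fun i => M.map (fun x => x ^ p ^ (j - 1 - i)))).prod).map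
          (fun x => x ^ p)) * M := by
  rw [List.range_succ, List.map_append, List.prod_append]
  have h1 : (M.map (fun x => x ^ p ^ (j - j))) = M := by
    ext i l; simp
  have h2 : ((List.range j).map (fun i => M.map (fun x => x ^ p ^ (j - i)))).prod
      = ((((List.range j).map (fun i => M.map (fun x => x ^ p ^ (j - 1 - i)))).prod).map
          (fun x => x ^ p)) := by
    have hmm : ∀ P : Matrix n n R, P.map (fun x => x ^ p) = (frobenius R p).mapMatrix P := by
      intro P; ext i l; simp [frobenius_def]
    rw [hmm]
    rw [show (frobenius R p).mapMatrix ((List.map (fun i => M.map fun x => x ^ p ^ (j - 1 - i)) (List.range j)).prod) = _ from map_list_prod ((frobenius R p).mapMatrix).toMonoidHom _, List.map_map]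
    congr 1
    apply List.map_congr_left
    intro i hi
    rw [List.mem_range] at hi
    ext a c
    simp only [Function.comp_apply, RingHom.toMonoidHom_eq_coe, MonoidHom.coe_coe,
      RingHom.mapMatrix_apply, Matrix.map_apply, frobenius_def]
    rw [← pow_mul, ← pow_succ]
    congr 2
    omega
  rw [h2]; simp [h1]

end Aux

section Aux2

variable {k : Type*} [Field k] {p N : ℕ} [Fact p.Prime] [CharP k p]

lemma aux_iter_vec (A : Matrix (Fin N) (Fin N) k)
    (φ : (Fin N → k) → (Fin N → k))
    (hφ : ∀ v, φ v = A.transpose.mulVec (fun j => v j ^ p)) (j : ℕ) (v : Fin N → k) :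
    φ^[j] v
      = (((List.range j).map (fun i => A.map (fun x => x ^ p ^ (j - 1 - i)))).prod).transpose.mulVec
        (fun r => v r ^ p ^ j) := by
  induction j generalizing v with
  | zero => simp
  | succ j ih =>
    rw [Function.iterate_succ_apply', ih, hφ]
    have key : (fun r => ((((List.range j).map
          (fun i => A.map (fun x => x ^ p ^ (j - 1 - i)))).prod).transpose.mulVec
            (fun l => v l ^ p ^ j)) r ^ p)
        = ((((List.range j).map (fun i => A.map (fun x => x ^ p ^ (j - 1 - i)))).prod.map
            (fun x => x ^ p)).transpose.mulVec (fun l => v l ^ p ^ (j+1))) := by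
      funext r
      simp only [Matrix.mulVec, dotProduct, Matrix.transpose_apply, Matrix.map_apply]
      rw [show ∀ a : k, a ^ p = frobenius k p a from fun a => rfl, map_sum]
      congr 1; funext l
      rw [_root_.map_mul]
      simp only [frobenius_def]
      rw [← pow_mul, ← pow_succ]
    rw [key, Matrix.mulVec_mulVec, ← Matrix.transpose_mul]
    simp only [Nat.add_sub_cancel]
    rw [aux_pmat_succ (p := p)]

lemma aux_semilin (A : Matrix (Fin N) (Fin N) k)
    (φ : (Fin N → k) → (Fin N → k))
    (hφ : ∀ v, φ v = A.transpose.mulVec (fun j => v j ^ p))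
    {ι : Type*} [Fintype ι] (c : ι → k) (u : ι → (Fin N → k)) :
    φ (∑ l, c l • u l) = ∑ l, (c l ^ p) • φ (u l) := by
  rw [hφ]
  have : (fun r => (∑ l, c l • u l) r ^ p) = ∑ l, (c l ^ p) • (fun r => u l r ^ p) := by
    funext r
    simp only [Finset.sum_apply, Pi.smul_apply, smul_eq_mul]
    rw [show ∀ a : k, a ^ p = frobenius k p a from fun a => rfl, map_sum]
    congr 1; funext l
    rw [_root_.map_mul]; simp [frobenius_def]
  rw [this, ← Matrix.mulVecLin_apply, map_sum]
  simp only [_root_.map_smul]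
  congr 1; funext l
  rw [hφ, Matrix.mulVecLin_apply]

lemma aux_iter_basis (A : Matrix (Fin N) (Fin N) k) {s₀ : ℕ}
    (φ : (Fin N → k) → (Fin N → k))
    (hφ : ∀ v, φ v = A.transpose.mulVec (fun j => v j ^ p))
    (w : Fin s₀ → (Fin N → k)) (Ass : Matrix (Fin s₀) (Fin s₀) k)
    (hA : ∀ i, φ (w i) = ∑ j, Ass i j • w j) (j : ℕ) (i : Fin s₀) :
    φ^[j] (w i)
      = ∑ l, (((List.range j).map (fun i => Ass.map (fun x => x ^ p ^ (j - 1 - i)))).prod) i l • w l := by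
  induction j with
  | zero =>
    simp only [Function.iterate_zero, id_eq, List.range_zero, List.map_nil, List.prod_nil]
    rw [Finset.sum_eq_single i]
    · simp
    · intro l _ hl; simp [Matrix.one_apply, (Ne.symm hl)]
    · intro h; simp at h
  | succ j ih =>
    rw [Function.iterate_succ_apply', ih, aux_semilin A φ hφ]
    have : ∀ l, (φ (w l)) = ∑ r, Ass l r • w r := hA
    simp only [this]
    simp only [Finset.smul_sum, smul_smul]
    rw [Finset.sum_comm]
    simp only [Nat.add_sub_cancel]
    rw [aux_pmat_succ (p := p)]
    refine Finset.sum_congr rfl fun r _ => ?_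
    rw [Matrix.mul_apply, Finset.sum_smul]
    refine Finset.sum_congr rfl fun x _ => ?_
    simp [Matrix.map_apply]

end Aux2



set_option synthInstance.maxHeartbeats 1000000 in
set_option maxHeartbeats 1000000 in
open Polynomial Matrix Module Module.Free LinearMap in
/-- Lemma `semilincharpol`: let `φ` be the Frobenius-semilinear endomorphism of
`k^N` (`k = 𝔽_q`, `q = p^m`) with matrix `ᵗA`, i.e. `φ(v) = ᵗA · σ(v)`. If the
semisimple part `V_ss = ⋂ Im(φ^n)` is nonzero, with basis `b` of size `s₀` and
`A_ss` the matrix of `φ|_{V_ss}` in that basis, then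
`det(I − T·A^{σ^{m−1}}⋯A^{σ}·A) = det(I − T·A_ss^{σ^{m−1}}⋯A_ss^{σ}·A_ss)`;
this polynomial has degree `s₀ = dim V_ss` and leading coefficient (up to sign)
`N_{k/𝔽_p}(det A_ss) = ∏_{j<m} (det A_ss)^{p^j}`. -/
theorem stmt_19 (p m N s₀ : ℕ) (hp : p.Prime) (hm : 0 < m)
    (k : Type*) [Field k] [Fintype k] [CharP k p]
    (hcard : Fintype.card k = p ^ m)
    (A : Matrix (Fin N) (Fin N) k)
    (φ : (Fin N → k) → (Fin N → k))
    (hφ : ∀ v, φ v = A.transpose.mulVec (fun j => v j ^ p))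
    (S : Submodule k (Fin N → k))
    (hS : (S : Set (Fin N → k)) = ⋂ n : ℕ, Set.range φ^[n + 1])
    (hSne : S ≠ ⊥)
    (b : Basis (Fin s₀) k S)
    (Ass : Matrix (Fin s₀) (Fin s₀) k)
    (hAss : ∀ i, φ ((b i : Fin N → k)) = ∑ j, Ass i j • ((b j : Fin N → k))) :
    ((1 : Matrix (Fin N) (Fin N) (Polynomial k)) - (Polynomial.X : Polynomial k) •
        (((List.range m).map
          (fun j => A.map (fun x => x ^ p ^ (m - 1 - j)))).prod).map Polynomial.C).det
      = ((1 : Matrix (Fin s₀) (Fin s₀) (Polynomial k)) - (Polynomial.X : Polynomial k) •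
        (((List.range m).map
          (fun j => Ass.map (fun x => x ^ p ^ (m - 1 - j)))).prod).map Polynomial.C).det ∧
    ((1 : Matrix (Fin N) (Fin N) (Polynomial k)) - (Polynomial.X : Polynomial k) •
        (((List.range m).map
          (fun j => A.map (fun x => x ^ p ^ (m - 1 - j)))).prod).map Polynomial.C).det.natDegree
      = s₀ ∧
    ((1 : Matrix (Fin N) (Fin N) (Polynomial k)) - (Polynomial.X : Polynomial k) •
        (((List.range m).map
          (fun j => A.map (fun x => x ^ p ^ (m - 1 - j)))).prod).map Polynomial.C).det.leadingCoeff
      = (-1) ^ s₀ * ∏ j ∈ Finset.range m, Ass.det ^ p ^ j := by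
  haveI : Fact p.Prime := ⟨hp⟩
  classical
  set B := ((List.range m).map (fun j => A.map (fun x => x ^ p ^ (m - 1 - j)))).prod with hBdef
  set Bss := ((List.range m).map (fun j => Ass.map (fun x => x ^ p ^ (m - 1 - j)))).prod with hBssdef
  set ψ : Module.End k (Fin N → k) := Matrix.mulVecLin B.transpose with hψdef
  have hψ : ∀ v, ψ v = φ^[m] v := by
    intro v
    rw [aux_iter_vec A φ hφ m v, show (fun r => v r ^ p ^ m) = v from
      funext fun r => by rw [← hcard]; exact FiniteField.pow_card (v r)]
    rfl
  have hco : ⇑ψ = φ^[m] := funext hψ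
  have hψn : ∀ n : ℕ, ⇑(ψ^n) = φ^[m*n] := by
    intro n
    funext v
    rw [Module.End.pow_apply, hco, ← Function.iterate_mul]
  have hS' : ∀ x, x ∈ S ↔ ∀ n : ℕ, x ∈ Set.range (φ^[n+1]) := by
    intro x
    rw [show (x ∈ S ↔ x ∈ (S : Set _)) from Iff.rfl, hS, Set.mem_iInter]
  have hmono : ∀ (a c : ℕ) (x), x ∈ Set.range (φ^[a+c]) → x ∈ Set.range (φ^[a]) := by
    rintro a c x ⟨y, rfl⟩
    exact ⟨φ^[c] y, (Function.iterate_add_apply φ a c y).symm⟩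
  have hWS : (⨅ n : ℕ, LinearMap.range (ψ^n)) = S := by
    ext x
    simp only [Submodule.mem_iInf, LinearMap.mem_range]
    rw [hS' x]
    constructor
    · intro h n
      obtain ⟨y, hy⟩ := h (n+1)
      rw [hψn] at hy
      have hle : n + 1 ≤ m * (n+1) := Nat.le_mul_of_pos_left (n+1) hm
      refine hmono (n+1) (m*(n+1) - (n+1)) x ⟨y, ?_⟩
      rw [Nat.add_sub_cancel' hle]
      exact hy
    · intro h n
      rcases Nat.eq_zero_or_pos (m*n) with h0 | h0
      · exact ⟨x, by rw [hψn, h0]; rfl⟩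
      · obtain ⟨y, hy⟩ := h (m*n - 1)
        refine ⟨y, ?_⟩
        rw [hψn]
        rw [show m*n - 1 + 1 = m*n from Nat.succ_pred_eq_of_pos h0] at hy
        exact hy
  set V := ⨆ n : ℕ, LinearMap.ker (ψ^n) with hVdef
  have hcompl : IsCompl V S := by
    rw [← hWS]; exact LinearMap.isCompl_iSup_ker_pow_iInf_range_pow ψ
  have hφV : ∀ x ∈ V, ψ x ∈ V := by
    intro x hx
    obtain ⟨n, hn⟩ := Filter.eventually_atTop.mp ψ.eventually_iSup_ker_pow_eq
    have hxk : x ∈ LinearMap.ker (ψ^n) := by rw [← hn n le_rfl]; exact hx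
    have hmem : ψ x ∈ LinearMap.ker (ψ^n) := by
      rw [LinearMap.mem_ker] at hxk ⊢
      show (ψ^n) (ψ x) = 0
      rw [← Module.End.mul_apply, ← pow_succ, pow_succ', Module.End.mul_apply, hxk, map_zero]
    exact le_iSup (fun n => LinearMap.ker (ψ^n)) n hmem
  have hφS : ∀ x ∈ S, ψ x ∈ S := by
    intro x hx
    rw [← hWS] at hx ⊢
    simp only [Submodule.mem_iInf, LinearMap.mem_range] at hx ⊢
    intro n
    obtain ⟨y, rfl⟩ := hx n
    exact ⟨ψ y, by rw [← Module.End.mul_apply, ← pow_succ, pow_succ', Module.End.mul_apply]⟩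
  set F := ψ.restrict hφV with hFdef
  set G := ψ.restrict hφS with hGdef
  have hsplit : ψ.charpoly = F.charpoly * G.charpoly := by
    let e := Submodule.prodEquivOfIsCompl V S hcompl
    have hψ2 : F.prodMap G = e.symm.conj ψ := by
      apply ((chooseBasis k V).prod (chooseBasis k S)).ext
      simp only [Basis.prod_apply, coe_inl, coe_inr, prodMap_apply, LinearEquiv.conj_apply,
        LinearEquiv.symm_symm, Submodule.coe_prodEquivOfIsCompl, coe_comp, LinearEquiv.coe_coe,
        Function.comp_apply, coprod_apply, Submodule.coe_subtype, map_add, Sum.forall, Sum.elim_inl,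
        map_zero, ZeroMemClass.coe_zero, add_zero, LinearEquiv.eq_symm_apply, and_self,
        Submodule.coe_prodEquivOfIsCompl', restrict_coe_apply, implies_true, Sum.elim_inr,
        zero_add, e, F, G]
    rw [← e.symm.charpoly_conj ψ, ← hψ2, LinearMap.charpoly_prodMap]
  have hfinV : F.charpoly = X ^ finrank k V := by
    rw [LinearMap.charpoly_eq_X_pow_iff]
    rintro ⟨x, hx⟩
    obtain ⟨n, hn⟩ := Filter.eventually_atTop.mp ψ.eventually_iSup_ker_pow_eq
    have hxk : (ψ^n) x = 0 := by
      have : x ∈ LinearMap.ker (ψ^n) := by rw [← hn n le_rfl]; exact hx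
      exact this
    refine ⟨n, ?_⟩
    rw [Module.End.pow_restrict]
    apply Subtype.ext
    rw [LinearMap.restrict_coe_apply, hxk]
    rfl
  have hGb : ∀ i, (G (b i) : Fin N → k) = ∑ l, Bss i l • (b l : Fin N → k) := by
    intro i
    have h1 : (G (b i) : Fin N → k) = ψ (b i) := LinearMap.restrict_coe_apply _ _ _
    rw [h1, hψ, aux_iter_basis A φ hφ (fun i => (b i : Fin N → k)) Ass hAss m i]
  have hGmat : LinearMap.toMatrix b b G = Bss.transpose := by
    ext i j
    rw [LinearMap.toMatrix_apply]
    have hx : G (b j) = ∑ l, Bss j l • b l := by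
      apply Subtype.coe_injective
      show (G (b j) : Fin N → k) = _
      rw [hGb j]
      simp
    rw [hx, Basis.repr_sum_self]
    rfl
  have hGchar : G.charpoly = Bss.charpoly := by
    rw [← LinearMap.charpoly_toMatrix G b, hGmat, aux_charpoly_transpose]
  have hψchar : ψ.charpoly = B.charpoly := by
    rw [← LinearMap.charpoly_toMatrix ψ (Pi.basisFun k (Fin N)), LinearMap.toMatrix_eq_toMatrix',
      show ψ = Matrix.toLin' B.transpose from rfl, LinearMap.toMatrix'_toLin',
      aux_charpoly_transpose]
  have hGinj : ∀ x : S, G x = 0 → x = 0 := by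
    intro x hx
    have h1 : ψ (x : Fin N → k) = 0 := by
      rw [← LinearMap.restrict_coe_apply ψ hφS x, hx]; rfl
    have h2 : (x : Fin N → k) ∈ V :=
      le_iSup (fun n => LinearMap.ker (ψ^n)) 1 (by simpa using h1)
    have h3 : (x : Fin N → k) ∈ V ⊓ S := ⟨h2, x.2⟩
    rw [hcompl.inf_eq_bot] at h3
    exact Subtype.coe_injective (by simpa using h3)
  have hc0 : Polynomial.constantCoeff G.charpoly ≠ 0 :=
    ((LinearMap.not_hasEigenvalue_zero_tfae G).out 2 5).mpr hGinj
  have htd : G.charpoly.natTrailingDegree = 0 :=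
    Polynomial.natTrailingDegree_eq_zero_of_constantCoeff_ne_zero hc0
  have hfinS : finrank k S = s₀ := by
    rw [finrank_eq_card_basis b, Fintype.card_fin]
  have hL : ((1 : Matrix (Fin N) (Fin N) (Polynomial k)) - (Polynomial.X : Polynomial k) •
      B.map Polynomial.C).det = G.charpoly.reverse := by
    rw [show ((1 : Matrix (Fin N) (Fin N) (Polynomial k)) - (Polynomial.X : Polynomial k) •
      B.map Polynomial.C).det = B.charpolyRev from rfl, ← Matrix.reverse_charpoly, ← hψchar,
      hsplit, hfinV, Polynomial.reverse_X_pow_mul]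
  have hR : ((1 : Matrix (Fin s₀) (Fin s₀) (Polynomial k)) - (Polynomial.X : Polynomial k) •
      Bss.map Polynomial.C).det = G.charpoly.reverse := by
    rw [show ((1 : Matrix (Fin s₀) (Fin s₀) (Polynomial k)) - (Polynomial.X : Polynomial k) •
      Bss.map Polynomial.C).det = Bss.charpolyRev from rfl, ← Matrix.reverse_charpoly, ← hGchar]
  have hdetB : Bss.det = ∏ j ∈ Finset.range m, Ass.det ^ p ^ j := by
    have h1 : Bss.det = ((List.range m).map
        (fun j => (Ass.map (fun x => x ^ p ^ (m-1-j))).det)).prod := by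
      rw [hBssdef, show ∀ M : Matrix (Fin s₀) (Fin s₀) k, M.det = Matrix.detMonoidHom M from
        fun _ => rfl, map_list_prod, List.map_map]
      rfl
    have h2 : ∀ j, (Ass.map (fun x => x ^ p ^ (m-1-j))).det = Ass.det ^ p ^ (m-1-j) := by
      intro j
      rw [show Ass.map (fun x : k => x ^ p ^ (m-1-j))
          = (_root_.iterateFrobenius k p (m-1-j)).mapMatrix Ass from rfl,
        ← RingHom.map_det, _root_.iterateFrobenius_def]
    simp only [h2] at h1
    rw [h1, show ((List.range m).map (fun j => Ass.det ^ p ^ (m-1-j))).prod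
      = ∏ j ∈ Finset.range m, Ass.det ^ p ^ (m-1-j) from rfl,
      Finset.prod_range_reflect (fun j => Ass.det ^ p ^ j) m]
  refine ⟨hL.trans hR.symm, ?_, ?_⟩
  · rw [hL, Polynomial.reverse_natDegree, htd, LinearMap.charpoly_natDegree, hfinS, Nat.sub_zero]
  · rw [hL, Polynomial.reverse_leadingCoeff]
    simp only [Polynomial.trailingCoeff]
    rw [htd, hGchar]
    have h := Matrix.det_eq_sign_charpoly_coeff Bss
    rw [Fintype.card_fin] at h
    rw [← hdetB, h, ← mul_assoc, ← mul_pow]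
    norm_num
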